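/- Every interdependent scheduling game with uniform rewards admits a pure Nash equilibrium. That is, for any k players with disjoint service sets T_1,…,T_k of equal size q and any transitive DAG G on T = ∪T_i, there exists a schedule π = (π_1,…,π_k) such that for every player i and every bijection π'_i : T_i → {1,…,q}, the utility of player i under (π_{−i}, π'_i) is at most his utility under π. -/

import Mathlib

open scoped Classical
noncomputable section

/-- The (1-based) time slot at which service `v` is deployed. -/
def slot {k q : ℕ} (σ : Fin k → Equiv.Perm (Fin q)) (v : Fin k × Fin q) : ℕ :=
  (σ v.1 v.2 : ℕ) + 1

/-- Activation time of `v`: latest deployment among `v` and its in-neighbors. -/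
def act {k q : ℕ} (E : Fin k × Fin q → Fin k × Fin q → Prop)
    (σ : Fin k → Equiv.Perm (Fin q)) (v : Fin k × Fin q) : ℕ :=
  (insert v (Finset.univ.filter fun w => E w v)).sup (slot σ)

/-- Player `i`'s utility under uniform rewards. -/
def util {k q : ℕ} (E : Fin k × Fin q → Fin k × Fin q → Prop)
    (σ : Fin k → Equiv.Perm (Fin q)) (i : Fin k) : ℕ :=
  ∑ j : Fin q, (q + 1 - act E σ (i, j))

/-- Utilitarian social welfare. -/
def welfare {k q : ℕ} (E : Fin k × Fin q → Fin k × Fin q → Prop)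
    (σ : Fin k → Equiv.Perm (Fin q)) : ℕ :=
  ∑ i : Fin k, util E σ i

/-- Pure Nash equilibrium: no unilateral deviation improves a player's utility. -/
def PNE {k q : ℕ} (E : Fin k × Fin q → Fin k × Fin q → Prop)
    (σ : Fin k → Equiv.Perm (Fin q)) : Prop :=
  ∀ (i : Fin k) (τ : Equiv.Perm (Fin q)),
    util E (Function.update σ i τ) i ≤ util E σ i

namespace ISGaux

variable {k q : ℕ} {E : Fin k × Fin q → Fin k × Fin q → Prop}

lemma slot_le_act (σ : Fin k → Equiv.Perm (Fin q)) (v : Fin k × Fin q) :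
    slot σ v ≤ act E σ v :=
  Finset.le_sup (Finset.mem_insert_self _ _)

lemma blocker_slot_le (σ : Fin k → Equiv.Perm (Fin q)) {u v : Fin k × Fin q}
    (h : E u v) : slot σ u ≤ act E σ v :=
  Finset.le_sup (Finset.mem_insert_of_mem (Finset.mem_filter.mpr ⟨Finset.mem_univ _, h⟩))

lemma one_le_act (σ : Fin k → Equiv.Perm (Fin q)) (v : Fin k × Fin q) :
    1 ≤ act E σ v :=
  le_trans (Nat.succ_le_succ (Nat.zero_le _)) (slot_le_act σ v)

lemma act_le_q (σ : Fin k → Equiv.Perm (Fin q)) (v : Fin k × Fin q) :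
    act E σ v ≤ q := by
  apply Finset.sup_le
  intro u _
  exact Nat.succ_le_of_lt (σ u.1 u.2).isLt

lemma act_mono (hT : Transitive E) (σ : Fin k → Equiv.Perm (Fin q))
    {u v : Fin k × Fin q} (h : E u v) : act E σ u ≤ act E σ v := by
  apply Finset.sup_le
  intro w hw
  rcases Finset.mem_insert.mp hw with rfl | hw
  · exact blocker_slot_le σ h
  · exact blocker_slot_le σ (hT (Finset.mem_filter.mp hw).2 h)

/-- Number of services active by time `s`. -/
def nact (E : Fin k × Fin q → Fin k × Fin q → Prop)
    (σ : Fin k → Equiv.Perm (Fin q)) (s : ℕ) : ℕ :=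
  (Finset.univ.filter fun v : Fin k × Fin q => act E σ v ≤ s).card

/-- Lexicographic potential. -/
def Phi (E : Fin k × Fin q → Fin k × Fin q → Prop)
    (σ : Fin k → Equiv.Perm (Fin q)) : ℕ :=
  ∑ s ∈ Finset.range q, (k * q + 1) ^ (q - 1 - s) * nact E σ (s + 1)

lemma nact_le_kq (σ : Fin k → Equiv.Perm (Fin q)) (s : ℕ) :
    nact E σ s ≤ k * q := by
  calc nact E σ s ≤ (Finset.univ : Finset (Fin k × Fin q)).card := Finset.card_le_card
        (Finset.filter_subset _ _)
    _ = k * q := by simp [Finset.card_univ]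

lemma util_eq_sum (σ : Fin k → Equiv.Perm (Fin q)) (i : Fin k) :
    util E σ i = ∑ s ∈ Finset.range q,
      (Finset.univ.filter fun j : Fin q => act E σ (i, j) ≤ s + 1).card := by
  have hterm : ∀ j : Fin q, q + 1 - act E σ (i, j)
      = ∑ s ∈ Finset.range q, if act E σ (i, j) ≤ s + 1 then 1 else 0 := by
    intro j
    have h1 : 1 ≤ act E σ (i, j) := one_le_act σ _
    have h2 : act E σ (i, j) ≤ q := act_le_q σ _
    rw [← Finset.card_filter]
    have : (Finset.range q).filter (fun s => act E σ (i, j) ≤ s + 1)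
        = Finset.Ico (act E σ (i, j) - 1) q := by
      ext s
      simp only [Finset.mem_filter, Finset.mem_range, Finset.mem_Ico]
      omega
    rw [this, Nat.card_Ico]
    omega
  calc util E σ i = ∑ j : Fin q, ∑ s ∈ Finset.range q,
        if act E σ (i, j) ≤ s + 1 then 1 else 0 := Finset.sum_congr rfl fun j _ => hterm j
    _ = ∑ s ∈ Finset.range q, ∑ j : Fin q,
        if act E σ (i, j) ≤ s + 1 then 1 else 0 := Finset.sum_comm
    _ = _ := Finset.sum_congr rfl fun s _ => (Finset.card_filter _ _).symm

lemma card_act_le (σ : Fin k → Equiv.Perm (Fin q)) (i : Fin k) (s : ℕ) :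
    (Finset.univ.filter fun j : Fin q => act E σ (i, j) ≤ s).card ≤ s := by
  have := Finset.card_le_card_of_injOn (f := fun j : Fin q => (σ i j : ℕ))
    (s := Finset.univ.filter fun j : Fin q => act E σ (i, j) ≤ s)
    (t := Finset.range s) ?_ ?_
  · simpa using this
  · intro j hj
    have hj' := (Finset.mem_filter.mp hj).2
    have : slot σ (i, j) ≤ s := le_trans (slot_le_act σ (i, j)) hj'
    simp only [slot] at this
    simp only [Finset.mem_coe, Finset.mem_range]
    omega
  · intro a _ b _ hab
    exact (σ i).injective (Fin.val_injective hab)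

lemma geo (c : ℕ) : ∀ m : ℕ, c * ∑ u ∈ Finset.range m, (c + 1) ^ u < (c + 1) ^ m := by
  intro m
  induction m with
  | zero => simp
  | succ m ih =>
      rw [Finset.sum_range_succ, Nat.mul_add, pow_succ]
      have h2 : (c + 1) ^ m * (c + 1) = (c + 1) ^ m + c * (c + 1) ^ m := by ring
      rw [h2]
      omega

end ISGaux

open ISGaux in
theorem stmt_11 {k q : ℕ} (E : Fin k × Fin q → Fin k × Fin q → Prop)
    (hTrans : Transitive E) (hIrr : Irreflexive E) :
    ∃ σ : Fin k → Equiv.Perm (Fin q), PNE E σ := by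
  obtain ⟨σ, -, hmax⟩ := Finset.exists_max_image (Finset.univ :
      Finset (Fin k → Equiv.Perm (Fin q))) (Phi E) ⟨fun _ => 1, Finset.mem_univ _⟩
  refine ⟨σ, ?_⟩
  intro i τ
  by_contra hcon
  push_neg at hcon
  set σ' := Function.update σ i τ with hσ'
  -- (a) find a level t where i activates more services under σ'
  have hsum : ∑ s ∈ Finset.range q,
      (Finset.univ.filter fun j : Fin q => act E σ (i, j) ≤ s + 1).card
      < ∑ s ∈ Finset.range q,
      (Finset.univ.filter fun j : Fin q => act E σ' (i, j) ≤ s + 1).card := by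
    rw [← util_eq_sum, ← util_eq_sum]; exact hcon
  obtain ⟨s0, hs0, hlt⟩ := Finset.exists_lt_of_sum_lt hsum
  set t := s0 + 1 with ht
  have htq : t ≤ q := Finset.mem_range.mp hs0
  set F : Finset (Fin q) := Finset.univ.filter fun j : Fin q => act E σ (i, j) ≤ t with hF
  set F' : Finset (Fin q) := Finset.univ.filter fun j : Fin q => act E σ' (i, j) ≤ t with hF'
  have hcard : F.card < F'.card := hlt
  have hF't : F'.card ≤ t := card_act_le σ' i t
  -- (b) minimal new service y
  have hSne : ∃ j : Fin q, j ∈ F' ∧ j ∉ F := by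
    by_contra hc
    push_neg at hc
    exact absurd (Finset.card_le_card fun j hj => hc j hj) (not_le.mpr hcard)
  set R : Fin q → Fin q → Prop := fun a b => E (i, a) (i, b) with hR
  haveI : IsTrans (Fin q) R := ⟨fun a b c hab hbc => hTrans hab hbc⟩
  haveI : IsIrrefl (Fin q) R := ⟨fun a => hIrr (i, a)⟩
  obtain ⟨jy, hjyS, hjymin⟩ := (Finite.wellFounded_of_trans_of_irrefl R).has_min
    {j : Fin q | j ∈ F' ∧ j ∉ F} (by obtain ⟨j, h1, h2⟩ := hSne; exact ⟨j, h1, h2⟩)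
  have hjyF' : act E σ' (i, jy) ≤ t := (Finset.mem_filter.mp hjyS.1).2
  have hjyF : ¬ act E σ (i, jy) ≤ t := fun h =>
    hjyS.2 (Finset.mem_filter.mpr ⟨Finset.mem_univ _, h⟩)
  -- (c) the key function and its counting bounds
  set key : Fin q → ℕ := fun j =>
    if act E σ (i, j) ≤ t then act E σ (i, j) else if j = jy then t else t + 1 with hkey
  have keybound : ∀ s : ℕ, s ≤ t →
      (Finset.univ.filter fun j : Fin q => key j ≤ s).card ≤ s := by
    intro s hs
    rcases eq_or_lt_of_le hs with heq | hslt
    · -- s = t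
      have hsub : (Finset.univ.filter fun j : Fin q => key j ≤ s) ⊆ insert jy F := by
        intro j hj
        have hj' := (Finset.mem_filter.mp hj).2
        rw [heq] at hj'
        simp only [hkey] at hj'
        split_ifs at hj' with h1 h2
        · exact Finset.mem_insert_of_mem (Finset.mem_filter.mpr ⟨Finset.mem_univ _, h1⟩)
        · exact Finset.mem_insert.mpr (Or.inl h2)
        · omega
      calc (Finset.univ.filter fun j : Fin q => key j ≤ s).card
          ≤ (insert jy F).card := Finset.card_le_card hsub
        _ ≤ F.card + 1 := Finset.card_insert_le _ _
        _ ≤ F'.card := hcard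
        _ ≤ s := heq ▸ hF't
    · -- s < t
      have hsub : (Finset.univ.filter fun j : Fin q => key j ≤ s)
          ⊆ Finset.univ.filter fun j : Fin q => act E σ (i, j) ≤ s := by
        intro j hj
        have hj' := (Finset.mem_filter.mp hj).2
        simp only [hkey] at hj'
        split_ifs at hj' with h1 h2
        · exact Finset.mem_filter.mpr ⟨Finset.mem_univ _, hj'⟩
        · omega
        · omega
      exact le_trans (Finset.card_le_card hsub) (card_act_le σ i s)
  -- (d) the rank permutation
  set lexlt : Fin q → Fin q → Prop := fun a b =>
    key a < key b ∨ (key a = key b ∧ a < b) with hlexlt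
  set r : Fin q → ℕ := fun j => (Finset.univ.filter fun z => lexlt z j).card with hr
  have lex_irrefl : ∀ j, ¬ lexlt j j := by
    intro j h
    rcases h with h | ⟨-, h⟩
    · exact lt_irrefl _ h
    · exact lt_irrefl _ h
  have r_lt_q : ∀ j, r j < q := by
    intro j
    have hsub : (Finset.univ.filter fun z => lexlt z j) ⊆ Finset.univ.erase j := by
      intro z hz
      refine Finset.mem_erase.mpr ⟨?_, Finset.mem_univ _⟩
      rintro rfl
      exact lex_irrefl z (Finset.mem_filter.mp hz).2
    have h1 := Finset.card_le_card hsub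
    rw [Finset.card_erase_of_mem (Finset.mem_univ _), Finset.card_univ,
      Fintype.card_fin] at h1
    have hq : 0 < q := j.pos
    show (Finset.univ.filter fun z => lexlt z j).card < q
    omega
  have r_strict : ∀ a b, lexlt a b → r a < r b := by
    intro a b hab
    have hsub : insert a (Finset.univ.filter fun z => lexlt z a)
        ⊆ Finset.univ.filter fun z => lexlt z b := by
      intro z hz
      rcases Finset.mem_insert.mp hz with rfl | hz
      · exact Finset.mem_filter.mpr ⟨Finset.mem_univ _, hab⟩
      · refine Finset.mem_filter.mpr ⟨Finset.mem_univ _, ?_⟩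
        have hza := (Finset.mem_filter.mp hz).2
        rcases hza with h | ⟨h1, h2⟩ <;> rcases hab with h' | ⟨h1', h2'⟩
        · exact Or.inl (lt_trans h h')
        · exact Or.inl (h1' ▸ h)
        · exact Or.inl (h1 ▸ h')
        · exact Or.inr ⟨h1.trans h1', lt_trans h2 h2'⟩
    have hnm : a ∉ (Finset.univ.filter fun z => lexlt z a) := fun h =>
      lex_irrefl a (Finset.mem_filter.mp h).2
    have h1 := Finset.card_le_card hsub
    rw [Finset.card_insert_of_notMem hnm] at h1
    show (Finset.univ.filter fun z => lexlt z a).card < (Finset.univ.filter fun z => lexlt z b).card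
    omega
  have lex_total : ∀ a b : Fin q, a ≠ b → lexlt a b ∨ lexlt b a := by
    intro a b hab
    rcases lt_trichotomy (key a) (key b) with h | h | h
    · exact Or.inl (Or.inl h)
    · rcases lt_trichotomy a b with h' | h' | h'
      · exact Or.inl (Or.inr ⟨h, h'⟩)
      · exact absurd h' hab
      · exact Or.inr (Or.inr ⟨h.symm, h'⟩)
    · exact Or.inr (Or.inl h)
  have hinj : Function.Injective (fun j : Fin q => (⟨r j, r_lt_q j⟩ : Fin q)) := by
    intro a b hab
    by_contra hne
    have hval : r a = r b := congrArg Fin.val hab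
    rcases lex_total a b hne with h | h
    · exact absurd hval (Nat.ne_of_lt (r_strict a b h))
    · exact absurd hval.symm (Nat.ne_of_lt (r_strict b a h))
  set π' : Equiv.Perm (Fin q) :=
    Equiv.ofBijective _ (Finite.injective_iff_bijective.mp hinj) with hπ'
  have hπ'val : ∀ j, (π' j : ℕ) = r j := by
    intro j
    rw [hπ']
    rfl
  set σ'' := Function.update σ i π' with hσ''
  -- slot bound from keys
  have keyslot : ∀ (j : Fin q) (s : ℕ), key j ≤ s → s ≤ t → (π' j : ℕ) + 1 ≤ s := by
    intro j s hks hst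
    have hsub : insert j (Finset.univ.filter fun z => lexlt z j)
        ⊆ Finset.univ.filter fun z : Fin q => key z ≤ s := by
      intro z hz
      rcases Finset.mem_insert.mp hz with rfl | hz
      · exact Finset.mem_filter.mpr ⟨Finset.mem_univ _, hks⟩
      · refine Finset.mem_filter.mpr ⟨Finset.mem_univ _, ?_⟩
        rcases (Finset.mem_filter.mp hz).2 with h | ⟨h, -⟩
        · exact le_trans (le_of_lt h) hks
        · exact le_trans (le_of_eq h) hks
    have hnm : j ∉ (Finset.univ.filter fun z => lexlt z j) := fun h =>
      lex_irrefl j (Finset.mem_filter.mp h).2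
    have hcard := Finset.card_le_card hsub
    rw [Finset.card_insert_of_notMem hnm] at hcard
    have hrj : r j = (Finset.univ.filter fun z => lexlt z j).card := rfl
    have hk2 := keybound s hst
    rw [hπ'val j, hrj]
    omega
  have slot_i : ∀ u : Fin k × Fin q, u.1 = i → slot σ'' u = (π' u.2 : ℕ) + 1 := by
    intro u hu
    simp only [hσ'', slot, hu, Function.update_self]
  have slot_ne : ∀ u : Fin k × Fin q, u.1 ≠ i → slot σ'' u = slot σ u := by
    intro u hu
    simp only [hσ'', slot, Function.update_of_ne hu]
  have slot_ne' : ∀ u : Fin k × Fin q, u.1 ≠ i → slot σ' u = slot σ u := by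
    intro u hu
    simp only [hσ', slot, Function.update_of_ne hu]
  -- (e-i) services active by s ≤ t stay active
  have act_pres : ∀ (w : Fin k × Fin q) (s : ℕ), s ≤ t → act E σ w ≤ s →
      act E σ'' w ≤ s := by
    intro w s hst hws
    apply Finset.sup_le
    intro u hu
    have hau : act E σ u ≤ s := by
      rcases Finset.mem_insert.mp hu with rfl | hu
      · exact hws
      · exact le_trans (act_mono hTrans σ (Finset.mem_filter.mp hu).2) hws
    by_cases hu1 : u.1 = i
    · have hueq : (i, u.2) = u := by rw [← hu1]
      have hk : key u.2 ≤ s := by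
        simp only [hkey]
        rw [if_pos]
        · rw [hueq]; exact hau
        · rw [hueq]; exact le_trans hau hst
      rw [slot_i u hu1]
      exact keyslot u.2 s hk hst
    · rw [slot_ne u hu1]
      exact le_trans (slot_le_act σ u) hau
  -- (e-ii) y becomes active by t
  have act_y : act E σ'' (i, jy) ≤ t := by
    apply Finset.sup_le
    intro u hu
    by_cases hu1 : u.1 = i
    · have hueq : (i, u.2) = u := by rw [← hu1]
      by_cases hu2 : u.2 = jy
      · have hk : key u.2 ≤ t := by
          simp only [hkey]
          rw [if_neg, if_pos hu2]
          rw [hu2]; exact hjyF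
        rw [slot_i u hu1]
        exact keyslot u.2 t hk le_rfl
      · have hE : E u (i, jy) := by
          rcases Finset.mem_insert.mp hu with heq | hu
          · exact absurd (congrArg Prod.snd heq) hu2
          · exact (Finset.mem_filter.mp hu).2
        have h1 : act E σ' u ≤ t := le_trans (act_mono hTrans σ' hE) hjyF'
        have h2 : act E σ (i, u.2) ≤ t := by
          by_contra h2
          refine hjymin u.2 ⟨?_, ?_⟩ ?_
          · refine Finset.mem_filter.mpr ⟨Finset.mem_univ _, ?_⟩
            rw [hueq]; exact h1
          · intro hmem
            exact h2 (Finset.mem_filter.mp hmem).2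
          · show E (i, u.2) (i, jy)
            rw [hueq]; exact hE
        have hk : key u.2 ≤ t := by
          simp only [hkey]
          rw [if_pos h2]
          exact h2
        rw [slot_i u hu1]
        exact keyslot u.2 t hk le_rfl
    · rw [slot_ne u hu1, ← slot_ne' u hu1]
      rcases Finset.mem_insert.mp hu with heq | hu
      · exact absurd (congrArg Prod.fst heq) hu1
      · exact le_trans (blocker_slot_le σ' (Finset.mem_filter.mp hu).2) hjyF'
  -- (e-iii) nact comparisons
  have nA : ∀ s : ℕ, s ≤ t → nact E σ s ≤ nact E σ'' s := by
    intro s hst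
    apply Finset.card_le_card
    intro v hv
    exact Finset.mem_filter.mpr ⟨Finset.mem_univ _,
      act_pres v s hst (Finset.mem_filter.mp hv).2⟩
  have nB : nact E σ t + 1 ≤ nact E σ'' t := by
    have hsub : insert (i, jy) (Finset.univ.filter fun v : Fin k × Fin q =>
        act E σ v ≤ t) ⊆ Finset.univ.filter fun v : Fin k × Fin q =>
        act E σ'' v ≤ t := by
      intro v hv
      rcases Finset.mem_insert.mp hv with rfl | hv
      · exact Finset.mem_filter.mpr ⟨Finset.mem_univ _, act_y⟩
      · exact Finset.mem_filter.mpr ⟨Finset.mem_univ _,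
          act_pres v t le_rfl (Finset.mem_filter.mp hv).2⟩
    have hnm : (i, jy) ∉ (Finset.univ.filter fun v : Fin k × Fin q =>
        act E σ v ≤ t) := fun h => hjyF (Finset.mem_filter.mp h).2
    have := Finset.card_le_card hsub
    rwa [Finset.card_insert_of_notMem hnm] at this
  -- (f) Phi strictly increases
  set B := k * q + 1 with hB
  have hqt : q - t = q - 1 - s0 := by omega
  have tail_sum : ∑ s ∈ Finset.Ico t q, B ^ (q - 1 - s) * nact E σ (s + 1)
      < B ^ (q - 1 - s0) := by
    rw [← hqt]
    calc ∑ s ∈ Finset.Ico t q, B ^ (q - 1 - s) * nact E σ (s + 1)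
        ≤ ∑ s ∈ Finset.Ico t q, B ^ (q - 1 - s) * (k * q) :=
          Finset.sum_le_sum fun s _ => Nat.mul_le_mul_left _ (nact_le_kq σ _)
      _ = (k * q) * ∑ s ∈ Finset.Ico t q, B ^ (q - 1 - s) := by
          rw [Finset.mul_sum]; exact Finset.sum_congr rfl fun s _ => Nat.mul_comm _ _
      _ = (k * q) * ∑ u ∈ Finset.range (q - t), B ^ u := by
          congr 1
          rw [Finset.sum_Ico_eq_sum_range]
          have hcg : ∀ u ∈ Finset.range (q - t), B ^ (q - 1 - (t + u))
              = B ^ ((q - t) - 1 - u) := by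
            intro u hu
            congr 1
            have := Finset.mem_range.mp hu
            omega
          rw [Finset.sum_congr rfl hcg]
          exact Finset.sum_range_reflect (fun u => B ^ u) (q - t)
      _ < B ^ (q - t) := geo (k * q) (q - t)
  have hnact1 : nact E σ (s0 + 1) + 1 ≤ nact E σ'' (s0 + 1) := by
    rw [← ht]; exact nB
  have hsucc : ∀ ρ : Fin k → Equiv.Perm (Fin q),
      ∑ s ∈ Finset.range t, B ^ (q - 1 - s) * nact E ρ (s + 1)
      = ∑ s ∈ Finset.range s0, B ^ (q - 1 - s) * nact E ρ (s + 1)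
        + B ^ (q - 1 - s0) * nact E ρ (s0 + 1) := by
    intro ρ
    rw [ht, Finset.sum_range_succ]
  have head_sum : ∑ s ∈ Finset.range t, B ^ (q - 1 - s) * nact E σ (s + 1)
      + B ^ (q - 1 - s0)
      ≤ ∑ s ∈ Finset.range t, B ^ (q - 1 - s) * nact E σ'' (s + 1) := by
    rw [hsucc σ, hsucc σ'']
    have h1 : ∑ s ∈ Finset.range s0, B ^ (q - 1 - s) * nact E σ (s + 1)
        ≤ ∑ s ∈ Finset.range s0, B ^ (q - 1 - s) * nact E σ'' (s + 1) :=
      Finset.sum_le_sum fun s hs => Nat.mul_le_mul_left _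
        (nA (s + 1) (by have := Finset.mem_range.mp hs; omega))
    have h2 : B ^ (q - 1 - s0) * nact E σ (s0 + 1) + B ^ (q - 1 - s0)
        ≤ B ^ (q - 1 - s0) * nact E σ'' (s0 + 1) := by
      calc B ^ (q - 1 - s0) * nact E σ (s0 + 1) + B ^ (q - 1 - s0)
          = B ^ (q - 1 - s0) * (nact E σ (s0 + 1) + 1) := by ring
        _ ≤ B ^ (q - 1 - s0) * nact E σ'' (s0 + 1) := Nat.mul_le_mul_left _ hnact1
    omega
  have hsplit : ∀ ρ : Fin k → Equiv.Perm (Fin q), Phi E ρ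
      = ∑ s ∈ Finset.range t, B ^ (q - 1 - s) * nact E ρ (s + 1)
      + ∑ s ∈ Finset.Ico t q, B ^ (q - 1 - s) * nact E ρ (s + 1) := by
    intro ρ
    rw [Phi, ← Finset.sum_range_add_sum_Ico _ htq]
  have hPhi : Phi E σ < Phi E σ'' := by
    rw [hsplit σ, hsplit σ'']
    have h5 : (0:ℕ) ≤ ∑ s ∈ Finset.Ico t q, B ^ (q - 1 - s) * nact E σ'' (s + 1) :=
      Nat.zero_le _
    omega
  exact absurd hPhi (not_lt.mpr (hmax σ'' (Finset.mem_univ _)))
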